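/- arXiv:2405.00614 — 5 statements merged into one kernel-verified Lean document; each statement's English description precedes it below -/
import Mathlib

section
/- Let S = ((x_1,y_1),…,(x_n,y_n)) and S' = ((x'_1,y'_1),…,(x'_m,y'_m)) be datasets in X × {0,1}, let 𝒞 be a collection of subsets of X, and let p, p' be predictors such that p is (𝒞, ε)-multiaccurate with respect to Uni(S) and p' is (𝒞, ε')-multiaccurate with respect to Uni(S'). Then for every C ∈ 𝒞: |E_{(x,y)∼Uni(S)}[(p'(x) − p(x))·1[x ∈ C]]| ≤ (1/n)·|Σ_{i=1}^n y_i·1[x_i ∈ C] − Σ_{j=1}^m y'_j·1[x'_j ∈ C]| + (1/n)·|(S Δ_X S') ∩ C| + ε + (m/n)·ε'. -/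
open Finset
open scoped BigOperators Classical

noncomputable section

variable {X : Type*}

/-- The real value of a Boolean label. -/
def bval (y : Bool) : ℝ := if y then 1 else 0

/-- The real-valued indicator of a set `C ⊆ X`. -/
def ind (C : Set X) (x : X) : ℝ := if x ∈ C then 1 else 0

/-- `D` is a probability mass function on a finite type. -/
def IsDist {α : Type*} [Fintype α] (D : α → ℝ) : Prop :=
  (∀ a, 0 ≤ D a) ∧ ∑ a, D a = 1

/-- The multiaccuracy error `MA-err_D(p, C) = E_{(x,y)∼D}[(y − p(x))·1[x ∈ C]]`. -/
def MAerr [Fintype X] (D : X × Bool → ℝ) (p : X → ℝ) (C : Set X) : ℝ :=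
  ∑ z : X × Bool, D z * ((bval z.2 - p z.1) * ind C z.1)

/-- The `X`-marginal of a distribution on `X × Bool`. -/
def marg [Fintype X] (D : X × Bool → ℝ) (x : X) : ℝ := ∑ y : Bool, D (x, y)

/-- The statistical distance between two distributions on `X`, restricted to `C`:
`Δ_C(DX, DX') = Σ_{x ∈ C} |DX x − DX' x|`. -/
def statDist [Fintype X] (DX DX' : X → ℝ) (C : Set X) : ℝ :=
  ∑ x : X, ind C x * |DX x - DX' x|

/-- The probability, over `n` i.i.d. draws from `D`, of the event `E`. -/
def iidProb {α : Type*} [Fintype α] (D : α → ℝ) (n : ℕ)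
    (E : (Fin n → α) → Prop) : ℝ :=
  ∑ s : Fin n → α, if E s then ∏ i, D (s i) else 0

/-- The multiplicity `μ_S(x)` of the point `x` among the `x`-values of the dataset `S`. -/
def mult {n : ℕ} (S : Fin n → X × Bool) (x : X) : ℕ :=
  (univ.filter fun i => (S i).1 = x).card

/-- `|(S Δ_X S') ∩ C| = Σ_{x ∈ C} |μ_S(x) − μ_{S'}(x)|`, the size of the multiset
symmetric difference of the `x`-values of `S` and `S'`, restricted to `C`. -/
def symmDiffC [Fintype X] {n m : ℕ} (S : Fin n → X × Bool) (S' : Fin m → X × Bool)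
    (C : Set X) : ℝ :=
  ∑ x : X, ind C x * |(mult S x : ℝ) - (mult S' x : ℝ)|

/-- Pointwise robustness from empirical MA.
If `p` is `(𝒞, ε)`-MA w.r.t. `Uni(S)` and `p'` is `(𝒞, ε')`-MA w.r.t. `Uni(S')`, then for every
`C ∈ 𝒞`:
`|E_{(x,y)∼Uni(S)}[(p'(x) − p(x))·1[x ∈ C]]|
  ≤ (1/n)·|Σᵢ yᵢ·1[xᵢ ∈ C] − Σⱼ y'ⱼ·1[x'ⱼ ∈ C]| + (1/n)·|(S Δ_X S') ∩ C| + ε + (m/n)·ε'`. -/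
theorem stmt_4 [Fintype X] [Nonempty X]
    {n m : ℕ} (hn : 0 < n) (hm : 0 < m)
    (S : Fin n → X × Bool) (S' : Fin m → X × Bool)
    (𝒞 : Set (Set X)) (ε ε' : ℝ)
    (p p' : X → ℝ)
    (hp01 : ∀ x, p x ∈ Set.Icc (0 : ℝ) 1) (hp'01 : ∀ x, p' x ∈ Set.Icc (0 : ℝ) 1)
    (hpMA : ∀ C ∈ 𝒞,
      |(1 / (n : ℝ)) * ∑ i, (bval (S i).2 - p (S i).1) * ind C (S i).1| ≤ ε)
    (hp'MA : ∀ C ∈ 𝒞,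
      |(1 / (m : ℝ)) * ∑ j, (bval (S' j).2 - p' (S' j).1) * ind C (S' j).1| ≤ ε') :
    ∀ C ∈ 𝒞,
      |(1 / (n : ℝ)) * ∑ i, (p' (S i).1 - p (S i).1) * ind C (S i).1| ≤
        (1 / (n : ℝ)) *
            |∑ i, bval (S i).2 * ind C (S i).1 - ∑ j, bval (S' j).2 * ind C (S' j).1|
          + (1 / (n : ℝ)) * symmDiffC S S' C + ε + ((m : ℝ) / (n : ℝ)) * ε' := by
  intro C hC
  have key : ∀ {k : ℕ} (T : Fin k → X × Bool) (g : X → ℝ),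
      ∑ i, g ((T i).1) = ∑ x, (mult T x : ℝ) * g x := by
    intro k T g
    rw [← Finset.sum_fiberwise (univ : Finset (Fin k)) (fun i => (T i).1)
        (fun i => g ((T i).1))]
    refine Finset.sum_congr rfl fun x _ => ?_
    have hcg : ∀ i ∈ univ.filter (fun i => (T i).1 = x), g ((T i).1) = g x :=
      fun i hi => by rw [(Finset.mem_filter.mp hi).2]
    rw [Finset.sum_congr rfl hcg, Finset.sum_const, mult, nsmul_eq_mul, mul_comm]
  have hT : |∑ i, p' (S i).1 * ind C (S i).1 - ∑ j, p' (S' j).1 * ind C (S' j).1|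
      ≤ symmDiffC S S' C := by
    rw [key S (fun x => p' x * ind C x), key S' (fun x => p' x * ind C x),
      ← Finset.sum_sub_distrib]
    refine (Finset.abs_sum_le_sum_abs _ _).trans (Finset.sum_le_sum fun x _ => ?_)
    rw [← sub_mul, abs_mul, mul_comm]
    have h1 : |p' x * ind C x| ≤ ind C x := by
      unfold ind
      split
      · simpa [abs_of_nonneg (hp'01 x).1] using (hp'01 x).2
      · simp
    exact mul_le_mul_of_nonneg_right h1 (abs_nonneg _)
  have hsum : ∑ i, (p' (S i).1 - p (S i).1) * ind C (S i).1
      = (∑ i, (bval (S i).2 - p (S i).1) * ind C (S i).1)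
      + (∑ i, p' (S i).1 * ind C (S i).1 - ∑ j, p' (S' j).1 * ind C (S' j).1)
      - (∑ i, bval (S i).2 * ind C (S i).1 - ∑ j, bval (S' j).2 * ind C (S' j).1)
      - (∑ j, (bval (S' j).2 - p' (S' j).1) * ind C (S' j).1) := by
    simp only [sub_mul, Finset.sum_sub_distrib]
    ring
  have hn' : (0:ℝ) < n := Nat.cast_pos.mpr hn
  have hm' : (0:ℝ) < m := Nat.cast_pos.mpr hm
  have h1n : (0:ℝ) ≤ 1 / n := by positivity
  rw [hsum, abs_mul, abs_of_nonneg h1n]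
  have habs : |(∑ i, (bval (S i).2 - p (S i).1) * ind C (S i).1)
      + (∑ i, p' (S i).1 * ind C (S i).1 - ∑ j, p' (S' j).1 * ind C (S' j).1)
      - (∑ i, bval (S i).2 * ind C (S i).1 - ∑ j, bval (S' j).2 * ind C (S' j).1)
      - (∑ j, (bval (S' j).2 - p' (S' j).1) * ind C (S' j).1)|
      ≤ |∑ i, (bval (S i).2 - p (S i).1) * ind C (S i).1|
      + symmDiffC S S' C
      + |∑ i, bval (S i).2 * ind C (S i).1 - ∑ j, bval (S' j).2 * ind C (S' j).1|
      + |∑ j, (bval (S' j).2 - p' (S' j).1) * ind C (S' j).1| := by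
    calc _ ≤ |(∑ i, (bval (S i).2 - p (S i).1) * ind C (S i).1)
        + (∑ i, p' (S i).1 * ind C (S i).1 - ∑ j, p' (S' j).1 * ind C (S' j).1)
        - (∑ i, bval (S i).2 * ind C (S i).1 - ∑ j, bval (S' j).2 * ind C (S' j).1)|
        + |∑ j, (bval (S' j).2 - p' (S' j).1) * ind C (S' j).1| := abs_sub _ _
      _ ≤ (|(∑ i, (bval (S i).2 - p (S i).1) * ind C (S i).1)
        + (∑ i, p' (S i).1 * ind C (S i).1 - ∑ j, p' (S' j).1 * ind C (S' j).1)|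
        + |∑ i, bval (S i).2 * ind C (S i).1 - ∑ j, bval (S' j).2 * ind C (S' j).1|)
        + |∑ j, (bval (S' j).2 - p' (S' j).1) * ind C (S' j).1| := by
          gcongr; exact abs_sub _ _
      _ ≤ _ := by
          have := abs_add_le (∑ i, (bval (S i).2 - p (S i).1) * ind C (S i).1)
            (∑ i, p' (S i).1 * ind C (S i).1 - ∑ j, p' (S' j).1 * ind C (S' j).1)
          nlinarith [hT]
  have hA : (1/(n:ℝ)) * |∑ i, (bval (S i).2 - p (S i).1) * ind C (S i).1| ≤ ε := by
    have := hpMA C hC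
    rwa [abs_mul, abs_of_nonneg h1n] at this
  have hB : (1/(n:ℝ)) * |∑ j, (bval (S' j).2 - p' (S' j).1) * ind C (S' j).1|
      ≤ ((m:ℝ)/(n:ℝ)) * ε' := by
    have h := hp'MA C hC
    rw [abs_mul, abs_of_nonneg (by positivity : (0:ℝ) ≤ 1/(m:ℝ))] at h
    have hB' : |∑ j, (bval (S' j).2 - p' (S' j).1) * ind C (S' j).1| ≤ (m:ℝ) * ε' := by
      calc |∑ j, (bval (S' j).2 - p' (S' j).1) * ind C (S' j).1|
          = (m:ℝ) * ((1/(m:ℝ)) * |∑ j, (bval (S' j).2 - p' (S' j).1) * ind C (S' j).1|) := by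
            field_simp
        _ ≤ (m:ℝ) * ε' := by gcongr
    calc (1/(n:ℝ)) * |∑ j, (bval (S' j).2 - p' (S' j).1) * ind C (S' j).1|
        ≤ (1/(n:ℝ)) * ((m:ℝ) * ε') := by gcongr
      _ = ((m:ℝ)/(n:ℝ)) * ε' := by ring
  calc (1/(n:ℝ)) * |_| ≤ (1/(n:ℝ)) * (|∑ i, (bval (S i).2 - p (S i).1) * ind C (S i).1|
        + symmDiffC S S' C
        + |∑ i, bval (S i).2 * ind C (S i).1 - ∑ j, bval (S' j).2 * ind C (S' j).1|
        + |∑ j, (bval (S' j).2 - p' (S' j).1) * ind C (S' j).1|) := by gcongr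
    _ ≤ _ := by
        rw [mul_add, mul_add, mul_add]
        linarith [hA, hB]
end
end

section
/- Let 𝒜 be a deterministic learning algorithm whose outputs all lie in a family of predictors 𝒫 ⊆ [0,1]^X, and let 𝒞 be a collection of subsets of X. Suppose 𝒜 is (𝒞, ε₁)-empirically multiaccurate and 𝒫 satisfies (𝒞, n, ε₂, δ₂)-uniform convergence. Then for every probability distribution D_X on X, with probability at least 1 − δ₂ over x_1,…,x_n drawn i.i.d. from D_X, the following holds: for every labeling y_1,…,y_n ∈ {0,1} and every dataset S' = ((x'_1,y'_1),…,(x'_m,y'_m)) in X × {0,1} of any size m, writing S = ((x_1,y_1),…,(x_n,y_n)), p = 𝒜(S), p' = 𝒜(S'), for every C ∈ 𝒞: |E_{x∼D_X}[(p(x) − p'(x))·1[x ∈ C]]| ≤ (1/n)·|Σ_{i=1}^n y_i·1[x_i ∈ C] − Σ_{j=1}^m y'_j·1[x'_j ∈ C]| + (1/n)·|(S Δ_X S') ∩ C| + (1 + m/n)·ε₁ + 2ε₂. -/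
open Finset
open scoped BigOperators Classical

noncomputable section

variable {X : Type*}

/-- `𝒜` is `(𝒞, ε)`-empirically multiaccurate: for every `k` and every dataset `S` of size `k`,
the predictor `𝒜(S)` satisfies `|(1/k)·Σᵢ (yᵢ − p(xᵢ))·1[xᵢ ∈ C]| ≤ ε` for all `C ∈ 𝒞`. -/
def EmpMA (A : ∀ k, (Fin k → X × Bool) → X → ℝ) (𝒞 : Set (Set X)) (ε : ℝ) : Prop :=
  ∀ (k : ℕ), 0 < k → ∀ S : Fin k → X × Bool, ∀ C ∈ 𝒞,
    |(1 / (k : ℝ)) * ∑ i, (bval (S i).2 - A k S (S i).1) * ind C (S i).1| ≤ ε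

/-- The family of predictors `𝓟` satisfies `(𝒞, n, ε, δ)`-uniform convergence: for every
distribution `D` on `X × {0,1}`, with probability at least `1 − δ` over `n` i.i.d. draws from
`D`, for all `p ∈ 𝓟` and `C ∈ 𝒞` the empirical averages of `p(x)·1[x ∈ C]` and `y·1[x ∈ C]`
are within `ε` of their expectations. -/
def UnifConv [Fintype X] (𝓟 : Set (X → ℝ)) (𝒞 : Set (Set X)) (n : ℕ) (ε δ : ℝ) : Prop :=
  ∀ D : X × Bool → ℝ, IsDist D →
    1 - δ ≤ iidProb D n (fun s => ∀ p ∈ 𝓟, ∀ C ∈ 𝒞,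
      |(1 / (n : ℝ)) * ∑ i, p (s i).1 * ind C (s i).1
          - ∑ z : X × Bool, D z * (p z.1 * ind C z.1)| ≤ ε ∧
      |(1 / (n : ℝ)) * ∑ i, bval (s i).2 * ind C (s i).1
          - ∑ z : X × Bool, D z * (bval z.2 * ind C z.1)| ≤ ε)

/-- Monotonicity of `iidProb`. -/
lemma iidProb_mono {α : Type*} [Fintype α] (D : α → ℝ) (hD : ∀ a, 0 ≤ D a) (n : ℕ)
    (E F : (Fin n → α) → Prop) (h : ∀ s, E s → F s) :
    iidProb D n E ≤ iidProb D n F := by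
  unfold iidProb
  refine Finset.sum_le_sum fun s _ => ?_
  by_cases hE : E s
  · simp [hE, h s hE]
  · simp only [hE, if_false]
    by_cases hF : F s
    · simpa [hF] using Finset.prod_nonneg fun i _ => hD (s i)
    · simp [hF]

/-- Pushforward of `iidProb` along the deterministic labeling `x ↦ (x, false)`. -/
lemma iidProb_push [Fintype X] (DX : X → ℝ) (n : ℕ) (E : (Fin n → X × Bool) → Prop) :
    iidProb (fun z : X × Bool => if z.2 = false then DX z.1 else 0) n E
      = iidProb DX n (fun xs => E (fun i => (xs i, false))) := by
  unfold iidProb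
  rw [← Equiv.sum_comp (Equiv.arrowProdEquivProdArrow (Fin n) (fun _ => X) (fun _ => Bool)).symm]
  rw [Fintype.sum_prod_type]
  refine Finset.sum_congr rfl fun xs _ => ?_
  rw [Finset.sum_eq_single (fun _ => false)]
  · simp [Equiv.arrowProdEquivProdArrow]
  · intro bs _ hbs
    have : ∃ i, bs i = true := by
      by_contra hc
      push_neg at hc
      exact hbs (funext fun i => by simpa using hc i)
    obtain ⟨i, hi⟩ := this
    have : ∏ j, (if ((Equiv.arrowProdEquivProdArrow (Fin n) (fun _ => X) (fun _ => Bool)).symm (xs, bs) j).2 = false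
        then DX ((Equiv.arrowProdEquivProdArrow (Fin n) (fun _ => X) (fun _ => Bool)).symm (xs, bs) j).1 else 0) = 0 := by
      apply Finset.prod_eq_zero (Finset.mem_univ i)
      simp [Equiv.arrowProdEquivProdArrow, hi]
    simp only [this]
    split <;> rfl
  · simp

/-- Sums over a dataset can be rewritten as multiplicity-weighted sums over `X`. -/
lemma sum_comp_fst [Fintype X] {k : ℕ} (S : Fin k → X × Bool) (g : X → ℝ) :
    ∑ i, g ((S i).1) = ∑ x : X, (mult S x : ℝ) * g x := by
  rw [← Finset.sum_fiberwise' Finset.univ (fun i => (S i).1) g]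
  refine Finset.sum_congr rfl fun x _ => ?_
  rw [Finset.sum_const, nsmul_eq_mul]
  rfl

/-- Marginalizing the pushforward distribution. -/
lemma sum_push [Fintype X] (DX : X → ℝ) (f : X → ℝ) :
    ∑ z : X × Bool, (if z.2 = false then DX z.1 else 0) * f z.1 = ∑ x : X, DX x * f x := by
  rw [Fintype.sum_prod_type]
  refine Finset.sum_congr rfl fun x _ => ?_
  simp

/-- Empirical MA + uniform convergence ⟹ multigroup robustness.
If `𝒜` outputs predictors in `𝓟`, is `(𝒞, ε₁)`-empirically multiaccurate, and `𝓟` satisfies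
`(𝒞, n, ε₂, δ₂)`-uniform convergence, then for every distribution `D_X` on `X`, with
probability at least `1 − δ₂` over `x₁, …, xₙ` i.i.d. from `D_X`: for every labeling
`y₁, …, yₙ` and every dataset `S'` of any size `m`, writing `S = ((xᵢ, yᵢ))ᵢ`, `p = 𝒜(S)`,
`p' = 𝒜(S')`, for every `C ∈ 𝒞`:
`|E_{x∼D_X}[(p(x) − p'(x))·1[x ∈ C]]|
  ≤ (1/n)·|Σᵢ yᵢ·1[xᵢ ∈ C] − Σⱼ y'ⱼ·1[x'ⱼ ∈ C]| + (1/n)·|(S Δ_X S') ∩ C|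
    + (1 + m/n)·ε₁ + 2ε₂`. -/
theorem stmt_6 [Fintype X] [Nonempty X]
    (A : ∀ k, (Fin k → X × Bool) → X → ℝ)
    (𝓟 : Set (X → ℝ)) (h𝓟01 : ∀ p ∈ 𝓟, ∀ x, p x ∈ Set.Icc (0 : ℝ) 1)
    (hA𝓟 : ∀ k (S : Fin k → X × Bool), A k S ∈ 𝓟)
    (𝒞 : Set (Set X)) (n : ℕ) (hn : 0 < n) (ε₁ ε₂ δ₂ : ℝ)
    (hEmp : EmpMA A 𝒞 ε₁)
    (hUC : UnifConv 𝓟 𝒞 n ε₂ δ₂) :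
    ∀ DX : X → ℝ, IsDist DX →
      1 - δ₂ ≤ iidProb DX n (fun xs =>
        ∀ (ys : Fin n → Bool) (m : ℕ) (S' : Fin m → X × Bool), ∀ C ∈ 𝒞,
          |∑ x : X, DX x * ((A n (fun i => (xs i, ys i)) x - A m S' x) * ind C x)| ≤
            (1 / (n : ℝ)) *
                |∑ i, bval (ys i) * ind C (xs i) - ∑ j, bval (S' j).2 * ind C (S' j).1|
              + (1 / (n : ℝ)) * symmDiffC (fun i => (xs i, ys i)) S' C
              + (1 + (m : ℝ) / (n : ℝ)) * ε₁ + 2 * ε₂) := by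
  intro DX hDX
  set D : X × Bool → ℝ := fun z => if z.2 = false then DX z.1 else 0 with hDdef
  have hD : IsDist D := by
    constructor
    · intro a
      by_cases h : a.2 = false <;> simp [hDdef, h, hDX.1 a.1]
    · have h := sum_push DX (fun _ => (1:ℝ))
      simp only [mul_one] at h
      rw [hDdef, h]
      exact hDX.2
  have hUC' := hUC D hD
  rw [iidProb_push] at hUC'
  refine le_trans hUC' (iidProb_mono DX hDX.1 n _ _ ?_)
  intro xs hxs ys m S' C hC
  have hn' : (0 : ℝ) < n := by exact_mod_cast hn
  -- abbreviations
  set S : Fin n → X × Bool := fun i => (xs i, ys i) with hS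
  set p : X → ℝ := A n S with hp
  set p' : X → ℝ := A m S' with hp'
  set a : ℝ := ∑ x : X, DX x * (p x * ind C x) with ha
  set b : ℝ := ∑ x : X, DX x * (p' x * ind C x) with hb
  set c : ℝ := ∑ i, p (xs i) * ind C (xs i) with hc
  set d : ℝ := ∑ i, p' (xs i) * ind C (xs i) with hd
  set e : ℝ := ∑ i, bval (ys i) * ind C (xs i) with he
  set f : ℝ := ∑ j, bval (S' j).2 * ind C (S' j).1 with hf
  set g : ℝ := ∑ j, p' (S' j).1 * ind C (S' j).1 with hg
  -- uniform convergence bounds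
  have h1 : |(1 / (n:ℝ)) * c - a| ≤ ε₂ := by
    have := (hxs p (hA𝓟 n S) C hC).1
    rw [show (∑ z : X × Bool, D z * (p z.1 * ind C z.1)) = a by
      rw [ha]; exact sum_push DX (fun x => p x * ind C x)] at this
    simpa using this
  have h2 : |(1 / (n:ℝ)) * d - b| ≤ ε₂ := by
    have := (hxs p' (hA𝓟 m S') C hC).1
    rw [show (∑ z : X × Bool, D z * (p' z.1 * ind C z.1)) = b by
      rw [hb]; exact sum_push DX (fun x => p' x * ind C x)] at this
    simpa using this
  -- empirical multiaccuracy on S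
  have h3 : |(1 / (n:ℝ)) * (e - c)| ≤ ε₁ := by
    have := hEmp n hn S C hC
    rw [show (∑ i, (bval (S i).2 - A n S (S i).1) * ind C (S i).1) = e - c by
      rw [he, hc, ← Finset.sum_sub_distrib]
      exact Finset.sum_congr rfl fun i _ => by rw [hS]; ring] at this
    exact this
  have hε₁ : 0 ≤ ε₁ := le_trans (abs_nonneg _) h3
  -- empirical multiaccuracy on S'
  have h4 : |f - g| ≤ (m : ℝ) * ε₁ := by
    rcases Nat.eq_zero_or_pos m with hm | hm
    · subst hm
      simp [hf, hg]
    · have hm' : (0 : ℝ) < m := by exact_mod_cast hm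
      have := hEmp m hm S' C hC
      rw [show (∑ j, (bval (S' j).2 - A m S' (S' j).1) * ind C (S' j).1) = f - g by
        rw [hf, hg, ← Finset.sum_sub_distrib]
        exact Finset.sum_congr rfl fun j _ => by rw [hp']; ring] at this
      rw [abs_mul, abs_of_nonneg (by positivity : (0:ℝ) ≤ 1 / (m:ℝ))] at this
      calc |f - g| = (m : ℝ) * ((1 / (m:ℝ)) * |f - g|) := by field_simp
        _ ≤ (m : ℝ) * ε₁ := by
            exact mul_le_mul_of_nonneg_left this (le_of_lt hm')
  -- symmetric difference bound
  have h5 : |g - d| ≤ symmDiffC S S' C := by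
    have hp'01 : ∀ x, 0 ≤ p' x ∧ p' x ≤ 1 := fun x => (h𝓟01 p' (hA𝓟 m S') x : _)
    have hgd : g - d = ∑ x : X, ((mult S' x : ℝ) - (mult S x : ℝ)) * (p' x * ind C x) := by
      rw [hg, hd]
      rw [show (∑ j, p' (S' j).1 * ind C (S' j).1) =
          ∑ x : X, (mult S' x : ℝ) * (p' x * ind C x) from
        sum_comp_fst S' (fun x => p' x * ind C x)]
      rw [show (∑ i, p' (xs i) * ind C (xs i)) =
          ∑ x : X, (mult S x : ℝ) * (p' x * ind C x) from
        sum_comp_fst S (fun x => p' x * ind C x)]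
      rw [← Finset.sum_sub_distrib]
      exact Finset.sum_congr rfl fun x _ => by ring
    rw [hgd, symmDiffC]
    refine le_trans (Finset.abs_sum_le_sum_abs _ _) (Finset.sum_le_sum fun x _ => ?_)
    rw [abs_mul, abs_sub_comm]
    have hind : ind C x = 0 ∨ ind C x = 1 := by
      unfold ind; by_cases h : x ∈ C <;> simp [h]
    have h0 : |p' x * ind C x| ≤ ind C x := by
      rcases hind with h | h <;>
        rw [h] <;> simp [abs_mul, abs_of_nonneg (hp'01 x).1, (hp'01 x).2]
    calc |(mult S x : ℝ) - (mult S' x : ℝ)| * |p' x * ind C x|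
        ≤ |(mult S x : ℝ) - (mult S' x : ℝ)| * ind C x :=
          mul_le_mul_of_nonneg_left h0 (abs_nonneg _)
      _ = ind C x * |(mult S x : ℝ) - (mult S' x : ℝ)| := mul_comm _ _
  -- assemble
  have hT : (∑ x : X, DX x * ((p x - p' x) * ind C x)) = a - b := by
    rw [ha, hb, ← Finset.sum_sub_distrib]
    exact Finset.sum_congr rfl fun x _ => by ring
  rw [hT]
  have key : a - b = (a - (1/(n:ℝ)) * c) - (b - (1/(n:ℝ)) * d) - (1/(n:ℝ)) * (e - c)
      + (1/(n:ℝ)) * (e - f) + (1/(n:ℝ)) * (f - g) + (1/(n:ℝ)) * (g - d) := by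
    field_simp
    ring
  have hinv : (0:ℝ) ≤ 1 / (n:ℝ) := by positivity
  have b1 := abs_le.mp h1
  have b2 := abs_le.mp h2
  have b3 := abs_le.mp h3
  have b4a : (1/(n:ℝ)) * (e - f) ≤ (1/(n:ℝ)) * |e - f| :=
    mul_le_mul_of_nonneg_left (le_abs_self _) hinv
  have b4b : -((1/(n:ℝ)) * |e - f|) ≤ (1/(n:ℝ)) * (e - f) := by
    have := mul_le_mul_of_nonneg_left (neg_abs_le (e - f)) hinv
    linarith [this]
  have b5a : (1/(n:ℝ)) * (f - g) ≤ ((m:ℝ)/(n:ℝ)) * ε₁ := by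
    have h := (abs_le.mp h4).2
    calc (1/(n:ℝ)) * (f - g) ≤ (1/(n:ℝ)) * ((m:ℝ) * ε₁) :=
          mul_le_mul_of_nonneg_left h hinv
      _ = ((m:ℝ)/(n:ℝ)) * ε₁ := by ring
  have b5b : -(((m:ℝ)/(n:ℝ)) * ε₁) ≤ (1/(n:ℝ)) * (f - g) := by
    have h := (abs_le.mp h4).1
    calc -(((m:ℝ)/(n:ℝ)) * ε₁) = (1/(n:ℝ)) * (-((m:ℝ) * ε₁)) := by ring
      _ ≤ (1/(n:ℝ)) * (f - g) := mul_le_mul_of_nonneg_left h hinv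
  have b6a : (1/(n:ℝ)) * (g - d) ≤ (1/(n:ℝ)) * symmDiffC S S' C := by
    exact mul_le_mul_of_nonneg_left (le_trans (le_abs_self _) h5) hinv
  have b6b : -((1/(n:ℝ)) * symmDiffC S S' C) ≤ (1/(n:ℝ)) * (g - d) := by
    have h := le_trans (neg_le_neg h5) (neg_abs_le _)
    calc -((1/(n:ℝ)) * symmDiffC S S' C) = (1/(n:ℝ)) * (-(symmDiffC S S' C)) := by ring
      _ ≤ (1/(n:ℝ)) * (g - d) := mul_le_mul_of_nonneg_left h hinv
  have hexp : (1 + (m:ℝ)/(n:ℝ)) * ε₁ = ε₁ + ((m:ℝ)/(n:ℝ)) * ε₁ := by ring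
  rw [key, abs_le, hexp]
  constructor <;> linarith
end
end

section
/- Let 𝒜 be a deterministic learning algorithm whose outputs all lie in a family of predictors 𝒫 ⊆ [0,1]^X, and let 𝒞 be a collection of subsets of X. Suppose 𝒜 is (𝒞, ε₁)-empirically multiaccurate and 𝒫 satisfies (𝒞, n, ε₂, δ₂)-uniform convergence. Then 𝒜 is a (𝒞, n, ε₁ + 2ε₂, δ₂)-multiaccurate learning algorithm: for every distribution D on X × {0,1}, with probability at least 1 − δ₂ over n i.i.d. draws S = ((x_1,y_1),…,(x_n,y_n)) from D, the predictor p = 𝒜(S) satisfies |E_{(x,y)∼D}[(y − p(x))·1[x ∈ C]]| ≤ ε₁ + 2ε₂ for every C ∈ 𝒞. -/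
open Finset
open scoped BigOperators Classical

noncomputable section

variable {X : Type*}

/-- Empirical MA + uniform convergence ⟹ multiaccurate learning algorithm.
If `𝒜` outputs predictors in `𝓟`, is `(𝒞, ε₁)`-empirically multiaccurate, and `𝓟` satisfies
`(𝒞, n, ε₂, δ₂)`-uniform convergence, then for every distribution `D` on `X × {0,1}`, with
probability at least `1 − δ₂` over `n` i.i.d. draws `S` from `D`, the predictor `p = 𝒜(S)`
satisfies `|E_D[(y − p(x))·1[x ∈ C]]| ≤ ε₁ + 2ε₂` for every `C ∈ 𝒞`. -/
theorem stmt_7 [Fintype X] [Nonempty X]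
    (A : ∀ k, (Fin k → X × Bool) → X → ℝ)
    (𝓟 : Set (X → ℝ)) (h𝓟01 : ∀ p ∈ 𝓟, ∀ x, p x ∈ Set.Icc (0 : ℝ) 1)
    (hA𝓟 : ∀ k (S : Fin k → X × Bool), A k S ∈ 𝓟)
    (𝒞 : Set (Set X)) (n : ℕ) (hn : 0 < n) (ε₁ ε₂ δ₂ : ℝ)
    (hEmp : EmpMA A 𝒞 ε₁)
    (hUC : UnifConv 𝓟 𝒞 n ε₂ δ₂) :
    ∀ D : X × Bool → ℝ, IsDist D →
      1 - δ₂ ≤ iidProb D n (fun S => ∀ C ∈ 𝒞, |MAerr D (A n S) C| ≤ ε₁ + 2 * ε₂) := by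
  intro D hD
  refine le_trans (hUC D hD) (iidProb_mono D hD.1 n _ _ ?_)
  intro s hs C hC
  have hUCs := hs (A n s) (hA𝓟 n s) C hC
  have hemp := hEmp n hn s C hC
  set p := A n s with hp
  have hsplit : MAerr D p C =
      (∑ z : X × Bool, D z * (bval z.2 * ind C z.1))
        - ∑ z : X × Bool, D z * (p z.1 * ind C z.1) := by
    unfold MAerr
    rw [← Finset.sum_sub_distrib]
    apply Finset.sum_congr rfl
    intro z _
    ring
  have hempsplit : (1 / (n : ℝ)) * ∑ i, (bval (s i).2 - p (s i).1) * ind C (s i).1 =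
      ((1 / (n : ℝ)) * ∑ i, bval (s i).2 * ind C (s i).1)
        - (1 / (n : ℝ)) * ∑ i, p (s i).1 * ind C (s i).1 := by
    rw [← mul_sub, ← Finset.sum_sub_distrib]
    congr 1
    apply Finset.sum_congr rfl
    intro i _
    ring
  set EY := ∑ z : X × Bool, D z * (bval z.2 * ind C z.1)
  set EP := ∑ z : X × Bool, D z * (p z.1 * ind C z.1)
  set eY := (1 / (n : ℝ)) * ∑ i, bval (s i).2 * ind C (s i).1
  set eP := (1 / (n : ℝ)) * ∑ i, p (s i).1 * ind C (s i).1
  have key : MAerr D p C = (eY - eP) + (EY - eY) + (eP - EP) := by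
    rw [hsplit]; ring
  rw [key]
  calc |(eY - eP) + (EY - eY) + (eP - EP)|
      ≤ |eY - eP| + |EY - eY| + |eP - EP| := by
        exact (abs_add_le _ _).trans (by gcongr; exact abs_add_le _ _)
    _ ≤ ε₁ + ε₂ + ε₂ := by
        gcongr
        · rw [← hempsplit]; exact hemp
        · rw [abs_sub_comm]; exact hUCs.2
        · exact hUCs.1
    _ = ε₁ + 2 * ε₂ := by ring
end
end

section
/- Let S = ((x_1,y_1),…,(x_n,y_n)) be a dataset in X × {0,1}, let p : X → [0,1] be a predictor, let ε > 0, and let C ⊆ X satisfy |(1/n)·Σ_{i=1}^n (p(x_i) − y_i)·1[x_i ∈ C]| > ε. Let v = sign(Σ_{i=1}^n (p(x_i) − y_i)·1[x_i ∈ C]) ∈ {−1, +1} and define p' : X → [0,1] by p'(x) = min(1, max(0, p(x) − v·ε)) for x ∈ C and p'(x) = p(x) for x ∉ C. Then ν_S(p) − ν_S(p') ≥ ε², where ν_S(q) := (1/n)·Σ_{i=1}^n (y_i − q(x_i))². -/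
open Finset
open scoped BigOperators Classical

noncomputable section

variable {X : Type*}

/-- The empirical ℓ₂ error `ν_S(q) = (1/n)·Σᵢ (yᵢ − q(xᵢ))²` of a predictor on a dataset. -/
def nuS {n : ℕ} (S : Fin n → X × Bool) (q : X → ℝ) : ℝ :=
  (1 / (n : ℝ)) * ∑ i, (bval (S i).2 - q (S i).1) ^ 2

/-- Single-iteration loss decrease of the multiaccuracy-boost update.
If `|(1/n)·Σᵢ (p(xᵢ) − yᵢ)·1[xᵢ ∈ C]| > ε`, `v = sign(Σᵢ (p(xᵢ) − yᵢ)·1[xᵢ ∈ C])`, and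
`p'(x) = clamp₀¹(p(x) − v·ε)` on `C` and `p'(x) = p(x)` off `C`, then
`ν_S(p) − ν_S(p') ≥ ε²`. -/
theorem stmt_9 [Fintype X] [Nonempty X]
    {n : ℕ} (hn : 0 < n)
    (S : Fin n → X × Bool)
    (p : X → ℝ) (hp01 : ∀ x, p x ∈ Set.Icc (0 : ℝ) 1)
    (ε : ℝ) (hε : 0 < ε) (C : Set X)
    (hC : ε < |(1 / (n : ℝ)) * ∑ i, (p (S i).1 - bval (S i).2) * ind C (S i).1|)
    (v : ℝ) (hv : v = Real.sign (∑ i, (p (S i).1 - bval (S i).2) * ind C (S i).1))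
    (p' : X → ℝ)
    (hp' : ∀ x, p' x = if x ∈ C then min 1 (max 0 (p x - v * ε)) else p x) :
    nuS S p - nuS S p' ≥ ε ^ 2 := by
  have hn' : (0:ℝ) < n := by exact_mod_cast hn
  set T := ∑ i, (p (S i).1 - bval (S i).2) * ind C (S i).1 with hT
  have hTabs : (n:ℝ) * ε < |T| := by
    rw [abs_mul, abs_of_pos (by positivity : (0:ℝ) < 1/(n:ℝ))] at hC
    have := mul_lt_mul_of_pos_left hC hn'
    calc (n:ℝ)*ε < n * (1/n * |T|) := this
    _ = |T| := by field_simp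
  have hTne : T ≠ 0 := by
    intro h; rw [h, abs_zero] at hTabs; nlinarith
  have hvT : v * T = |T| := by
    rcases hTne.lt_or_gt with h | h
    · rw [hv, Real.sign_of_neg h, abs_of_neg h]; ring
    · rw [hv, Real.sign_of_pos h, abs_of_pos h]; ring
  have hv2 : v^2 = 1 := by
    rcases hTne.lt_or_gt with h | h
    · rw [hv, Real.sign_of_neg h]; norm_num
    · rw [hv, Real.sign_of_pos h]; norm_num
  have key : ∀ i, (2*v*ε*(p (S i).1 - bval (S i).2) - ε^2) * ind C (S i).1
      ≤ (bval (S i).2 - p (S i).1)^2 - (bval (S i).2 - p' (S i).1)^2 := by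
    intro i
    set x := (S i).1 with hx'
    set y := bval (S i).2 with hy
    have hy01 : 0 ≤ y ∧ y ≤ 1 := by
      rw [hy]; unfold bval; split <;> norm_num
    rw [hp' x]
    unfold ind
    by_cases hx : x ∈ C
    · simp only [hx, if_true, mul_one]
      have hclamp : (y - min 1 (max 0 (p x - v*ε)))^2 ≤ (y - (p x - v*ε))^2 := by
        rcases le_total (p x - v*ε) 0 with h | h
        · rw [max_eq_left h, min_eq_right (by norm_num : (0:ℝ) ≤ 1)]
          nlinarith [hy01.1, hy01.2]
        · rw [max_eq_right h]
          rcases le_total (p x - v*ε) 1 with h1 | h1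
          · rw [min_eq_right h1]
          · rw [min_eq_left h1]; nlinarith [hy01.1, hy01.2]
      nlinarith [hclamp, hv2]
    · simp [hx]
  have hsum : ∑ i, (2*v*ε*(p (S i).1 - bval (S i).2) - ε^2) * ind C (S i).1
      ≤ ∑ i, ((bval (S i).2 - p (S i).1)^2 - (bval (S i).2 - p' (S i).1)^2) :=
    Finset.sum_le_sum (fun i _ => key i)
  have hsum2 : ∑ i, (2*v*ε*(p (S i).1 - bval (S i).2) - ε^2) * ind C (S i).1
      = 2*v*ε*T - ε^2 * ∑ i, ind C (S i).1 := by
    rw [hT, Finset.mul_sum, Finset.mul_sum, ← Finset.sum_sub_distrib]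
    exact Finset.sum_congr rfl (fun i _ => by ring)
  have hind : ∑ i : Fin n, ind C (S i).1 ≤ (n:ℝ) := by
    calc ∑ i : Fin n, ind C (S i).1 ≤ ∑ _i : Fin n, (1:ℝ) :=
          Finset.sum_le_sum (fun i _ => by unfold ind; split <;> norm_num)
    _ = n := by simp
  have h1 : (n:ℝ) * ε^2 ≤ ∑ i, ((bval (S i).2 - p (S i).1)^2 - (bval (S i).2 - p' (S i).1)^2) := by
    have h2 : 2*v*ε*T = 2*ε*|T| := by rw [← hvT]; ring
    calc (n:ℝ) * ε^2 ≤ 2*ε*|T| - ε^2 * n := by nlinarith [hTabs, hε]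
    _ ≤ 2*v*ε*T - ε^2 * ∑ i, ind C (S i).1 := by
        rw [h2]; nlinarith [hind, sq_nonneg ε]
    _ ≤ _ := by rw [← hsum2]; exact hsum
  have heq : nuS S p - nuS S p'
      = (1/(n:ℝ)) * ∑ i, ((bval (S i).2 - p (S i).1)^2 - (bval (S i).2 - p' (S i).1)^2) := by
    unfold nuS; rw [Finset.sum_sub_distrib]; ring
  rw [ge_iff_le, heq]
  have hfin := mul_le_mul_of_nonneg_left h1 (le_of_lt (by positivity : (0:ℝ) < 1/(n:ℝ)))
  have hcancel : (1/(n:ℝ)) * ((n:ℝ)*ε^2) = ε^2 := by field_simp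
  linarith
end
end

section
/- Let 𝒬 ⊆ [0,1]^X be a finite family of predictors, let D be a probability distribution on X × {0,1}, let ε > 0, δ ∈ (0,1], c ≥ 0, and suppose n ≥ log(2|𝒬|/δ)/(2ε²). Then with probability at least 1 − δ over n i.i.d. draws (x_1,y_1),…,(x_n,y_n) from D, the following holds: for all p, q ∈ 𝒬, if (1/n)·Σ_{i=1}^n (y_i − q(x_i))² ≤ (1/n)·Σ_{i=1}^n (y_i − p(x_i))² − c, then E_{(x,y)∼D}[(y − q(x))²] ≤ E_{(x,y)∼D}[(y − p(x))²] + 2ε − c. In particular, applying this with c = k·ε² to the initial predictor p and the predictor p_k obtained after k iterations of the multiaccuracy-boost post-processing (each of which decreases the empirical squared loss by at least ε²) yields E_D[(y − p_k(x))²] ≤ E_D[(y − p(x))²] + 2ε − k·ε². -/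
open Finset
open scoped BigOperators Classical

noncomputable section

variable {X : Type*}

section Stmt13Helpers

lemma stmt13_phi_pos {μ : ℝ} (hμ0 : 0 ≤ μ) (hμ1 : μ ≤ 1) (t : ℝ) :
    0 < 1 - μ + μ * Real.exp t := by
  nlinarith [Real.exp_pos t, mul_nonneg hμ0 (Real.exp_pos t).le]

lemma stmt13_hoeffding_key {μ : ℝ} (hμ0 : 0 ≤ μ) (hμ1 : μ ≤ 1) {t : ℝ} (ht : 0 ≤ t) :
    1 - μ + μ * Real.exp t ≤ Real.exp (t * μ + t ^ 2 / 8) := by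
  set φ : ℝ → ℝ := fun u => 1 - μ + μ * Real.exp u with hφ
  have φpos : ∀ u, 0 < φ u := fun u => stmt13_phi_pos hμ0 hμ1 u
  set q : ℝ → ℝ := fun u => μ * Real.exp u / φ u with hq
  have hφd : ∀ u, HasDerivAt φ (μ * Real.exp u) u := by
    intro u
    simpa [hφ] using ((Real.hasDerivAt_exp u).const_mul μ).const_add (1 - μ)
  have hqd : ∀ u, HasDerivAt q (q u * (1 - q u)) u := by
    intro u
    have h1 : HasDerivAt (fun u => μ * Real.exp u) (μ * Real.exp u) u :=
      (Real.hasDerivAt_exp u).const_mul μ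
    have := h1.div (hφd u) (φpos u).ne'
    refine this.congr_deriv ?_
    have hφu := (φpos u).ne'
    simp only [hq]
    field_simp [hq]
  have hq0 : ∀ u, 0 ≤ q u := fun u =>
    div_nonneg (mul_nonneg hμ0 (Real.exp_pos u).le) (φpos u).le
  have hq1 : ∀ u, q u ≤ 1 := by
    intro u
    rw [div_le_one (φpos u)]
    simp only [hφ]; linarith
  set h' : ℝ → ℝ := fun u => u / 4 - q u + μ with hh'
  have hh'd : ∀ u, HasDerivAt h' (1 / 4 - q u * (1 - q u)) u := by
    intro u
    have := ((hasDerivAt_id u).div_const 4).sub (hqd u)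
    simpa [hh'] using this.add_const μ
  have hh'mono : Monotone h' := by
    apply monotone_of_deriv_nonneg
    · exact fun u => (hh'd u).differentiableAt
    · intro u
      rw [(hh'd u).deriv]
      nlinarith [hq0 u, hq1 u, sq_nonneg (q u - 1 / 2)]
  have hq00 : q 0 = μ := by simp [hq, hφ]
  have hh'0 : h' 0 = 0 := by simp [hh', hq00]
  have hh'nonneg : ∀ u, 0 ≤ u → 0 ≤ h' u := by
    intro u hu
    calc (0:ℝ) = h' 0 := hh'0.symm
    _ ≤ h' u := hh'mono hu
  set h : ℝ → ℝ := fun u => u ^ 2 / 8 + u * μ - Real.log (φ u) with hh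
  have hhd : ∀ u, HasDerivAt h (h' u) u := by
    intro u
    have hlog : HasDerivAt (fun u => Real.log (φ u)) (μ * Real.exp u / φ u) u :=
      (hφd u).log (φpos u).ne'
    have h2 : HasDerivAt (fun u : ℝ => u ^ 2 / 8 + u * μ) (2 * u / 8 + μ) u := by
      have := ((hasDerivAt_pow 2 u).div_const 8).add ((hasDerivAt_id u).mul_const μ)
      simp only [Pi.add_def] at this
      simpa using this
    have := h2.sub hlog
    refine this.congr_deriv ?_
    simp only [hh', hq]
    ring
  have hmono : MonotoneOn h (Set.Ici 0) := by
    apply monotoneOn_of_deriv_nonneg (convex_Ici 0)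
    · exact (Differentiable.continuous (fun u => (hhd u).differentiableAt)).continuousOn
    · intro u hu
      exact ((hhd u).differentiableAt).differentiableWithinAt
    · intro u hu
      rw [(hhd u).deriv]
      exact hh'nonneg u (le_of_lt (by simpa using hu))
  have h0 : h 0 = 0 := by simp [hh, hφ]
  have hht : 0 ≤ h t := by
    calc (0:ℝ) = h 0 := h0.symm
    _ ≤ h t := hmono Set.self_mem_Ici ht ht
  have hlog : Real.log (φ t) ≤ t * μ + t ^ 2 / 8 := by
    simp only [hh] at hht; linarith
  calc φ t ≤ Real.exp (Real.log (φ t)) := by rw [Real.exp_log (φpos t)]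
  _ ≤ _ := Real.exp_le_exp.2 hlog

variable {α : Type*} [Fintype α]

lemma stmt13_mean_mem_Icc (D : α → ℝ) (hD : IsDist D) (f : α → ℝ)
    (hf : ∀ a, f a ∈ Set.Icc (0:ℝ) 1) : (∑ a, D a * f a) ∈ Set.Icc (0:ℝ) 1 := by
  constructor
  · exact Finset.sum_nonneg fun a _ => mul_nonneg (hD.1 a) (hf a).1
  · rw [← hD.2]
    exact Finset.sum_le_sum fun a _ => by
      nlinarith [hD.1 a, (hf a).2]

lemma stmt13_mgf_bound (D : α → ℝ) (hD : IsDist D) (f : α → ℝ)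
    (hf : ∀ a, f a ∈ Set.Icc (0:ℝ) 1) {t : ℝ} (ht : 0 ≤ t) :
    ∑ a, D a * Real.exp (t * (f a - ∑ b, D b * f b)) ≤ Real.exp (t ^ 2 / 8) := by
  set μ := ∑ b, D b * f b with hμ
  obtain ⟨hμ0, hμ1⟩ := stmt13_mean_mem_Icc D hD f hf
  have point : ∀ a, Real.exp (t * (f a - μ)) ≤
      (1 - f a) * Real.exp (-(t * μ)) + f a * Real.exp (t * (1 - μ)) := by
    intro a
    have h := convexOn_exp.2 (Set.mem_univ (-(t * μ))) (Set.mem_univ (t * (1 - μ)))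
      (by linarith [(hf a).2] : (0:ℝ) ≤ 1 - f a) (hf a).1 (by ring)
    have he : (1 - f a) • (-(t * μ)) + f a • (t * (1 - μ)) = t * (f a - μ) := by
      simp only [smul_eq_mul]; ring
    rw [he] at h
    simpa using h
  calc ∑ a, D a * Real.exp (t * (f a - μ))
      ≤ ∑ a, D a * ((1 - f a) * Real.exp (-(t * μ)) + f a * Real.exp (t * (1 - μ))) :=
        Finset.sum_le_sum fun a _ => mul_le_mul_of_nonneg_left (point a) (hD.1 a)
    _ = Real.exp (-(t * μ)) * ((∑ a, D a) - μ) + Real.exp (t * (1 - μ)) * μ := by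
        set A := Real.exp (-(t * μ)) with hA
        set B := Real.exp (t * (1 - μ)) with hB
        have key : ∀ a, D a * ((1 - f a) * A + f a * B)
            = A * (D a - D a * f a) + B * (D a * f a) := fun a => by ring
        rw [Finset.sum_congr rfl (fun a _ => key a), Finset.sum_add_distrib,
          ← Finset.mul_sum, ← Finset.mul_sum, Finset.sum_sub_distrib, hμ]
    _ = Real.exp (-(t * μ)) * (1 - μ + μ * Real.exp t) := by
        rw [hD.2]
        rw [show t * (1 - μ) = t + -(t * μ) by ring, Real.exp_add]
        ring
    _ ≤ Real.exp (-(t * μ)) * Real.exp (t * μ + t ^ 2 / 8) :=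
        mul_le_mul_of_nonneg_left (stmt13_hoeffding_key hμ0 hμ1 ht) (Real.exp_pos _).le
    _ = Real.exp (t ^ 2 / 8) := by rw [← Real.exp_add]; ring_nf

lemma stmt13_chernoff (D : α → ℝ) (hD : IsDist D) (f : α → ℝ)
    (hf : ∀ a, f a ∈ Set.Icc (0:ℝ) 1) (n : ℕ) {ε : ℝ} (hε : 0 < ε) :
    iidProb D n (fun s => (n:ℝ) * ε ≤ (∑ i, f (s i)) - n * (∑ a, D a * f a))
      ≤ Real.exp (-(2 * n * ε ^ 2)) := by
  classical
  set μ := ∑ a, D a * f a with hμ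
  set t := 4 * ε with htdef
  have ht : 0 ≤ t := by positivity
  set g : α → ℝ := fun a => D a * Real.exp (t * (f a - μ)) with hg
  have step1 : iidProb D n (fun s => (n:ℝ) * ε ≤ (∑ i, f (s i)) - n * μ)
      ≤ ∑ s : Fin n → α, (∏ i, g (s i)) * Real.exp (-(t * (n * ε))) := by
    unfold iidProb
    apply Finset.sum_le_sum
    intro s _
    have hprodD : (0:ℝ) ≤ ∏ i, D (s i) := Finset.prod_nonneg fun i _ => hD.1 (s i)
    have hsum : ∑ i, t * (f (s i) - μ) = t * ((∑ i, f (s i)) - n * μ) := by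
      rw [← Finset.mul_sum, Finset.sum_sub_distrib, Finset.sum_const, Finset.card_univ]
      simp [nsmul_eq_mul]
    have hsplit : (∏ i, g (s i)) * Real.exp (-(t * (n * ε)))
        = (∏ i, D (s i)) * Real.exp (t * ((∑ i, f (s i)) - n * μ) - t * (n * ε)) := by
      simp only [hg]
      rw [Finset.prod_mul_distrib, ← Real.exp_sum, hsum, mul_assoc, ← Real.exp_add]
      ring_nf
    rw [hsplit]
    split_ifs with hE
    · have hex : (0:ℝ) ≤ t * ((∑ i, f (s i)) - ↑n * μ) - t * (↑n * ε) := by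
        have := mul_le_mul_of_nonneg_left hE ht
        linarith
      calc (∏ i, D (s i)) = (∏ i, D (s i)) * 1 := (mul_one _).symm
      _ ≤ _ := mul_le_mul_of_nonneg_left (Real.one_le_exp hex) hprodD
    · exact mul_nonneg hprodD (Real.exp_pos _).le
  have hfub : ∑ s : Fin n → α, ∏ i, g (s i) = (∑ a, g a) ^ n := by
    have := (Fintype.prod_sum (fun (_ : Fin n) (a : α) => g a)).symm
    rw [this, Finset.prod_const, Finset.card_univ, Fintype.card_fin]
  have hgnn : (0:ℝ) ≤ ∑ a, g a :=
    Finset.sum_nonneg fun a _ => mul_nonneg (hD.1 a) (Real.exp_pos _).le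
  calc iidProb D n _ ≤ (∑ s : Fin n → α, ∏ i, g (s i)) * Real.exp (-(t * (n * ε))) := by
        rw [← Finset.sum_mul] at step1; exact step1
    _ = (∑ a, g a) ^ n * Real.exp (-(t * (n * ε))) := by rw [hfub]
    _ ≤ (Real.exp (t ^ 2 / 8)) ^ n * Real.exp (-(t * (n * ε))) := by
        apply mul_le_mul_of_nonneg_right _ (Real.exp_pos _).le
        exact pow_le_pow_left₀ hgnn (stmt13_mgf_bound D hD f hf ht) n
    _ = Real.exp (-(2 * n * ε ^ 2)) := by
        rw [← Real.exp_nat_mul, ← Real.exp_add]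
        congr 1
        simp only [htdef]
        ring

lemma stmt13_iidProb_congr {D : α → ℝ} {n : ℕ} {E F : (Fin n → α) → Prop}
    (h : ∀ s, E s ↔ F s) : iidProb D n E = iidProb D n F := by
  unfold iidProb
  exact Finset.sum_congr rfl fun s _ => by rw [if_congr (h s) rfl rfl]

lemma stmt13_iidProb_mono {D : α → ℝ} (hD : IsDist D) {n : ℕ} {E F : (Fin n → α) → Prop}
    (h : ∀ s, E s → F s) : iidProb D n E ≤ iidProb D n F := by
  apply Finset.sum_le_sum
  intro s _
  have hp : (0:ℝ) ≤ ∏ i, D (s i) := Finset.prod_nonneg fun i _ => hD.1 (s i)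
  split_ifs with h1 h2
  · exact le_refl _
  · exact absurd (h s h1) h2
  · exact hp
  · exact le_refl _

lemma stmt13_iidProb_total {D : α → ℝ} (hD : IsDist D) (n : ℕ) :
    ∑ s : Fin n → α, ∏ i, D (s i) = 1 := by
  have := (Fintype.prod_sum (fun (_ : Fin n) (a : α) => D a)).symm
  rw [this, Finset.prod_const, hD.2, one_pow]

lemma stmt13_iidProb_not {D : α → ℝ} (hD : IsDist D) {n : ℕ} (E : (Fin n → α) → Prop) :
    iidProb D n (fun s => ¬ E s) = 1 - iidProb D n E := by
  have : iidProb D n (fun s => ¬ E s) + iidProb D n E = 1 := by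
    unfold iidProb
    rw [← Finset.sum_add_distrib, ← stmt13_iidProb_total hD n]
    exact Finset.sum_congr rfl fun s _ => by by_cases h : E s <;> simp [h]
  linarith

lemma stmt13_iidProb_or {D : α → ℝ} (hD : IsDist D) {n : ℕ} {A B : (Fin n → α) → Prop} :
    iidProb D n (fun s => A s ∨ B s) ≤ iidProb D n A + iidProb D n B := by
  unfold iidProb
  rw [← Finset.sum_add_distrib]
  apply Finset.sum_le_sum
  intro s _
  have hp : (0:ℝ) ≤ ∏ i, D (s i) := Finset.prod_nonneg fun i _ => hD.1 (s i)
  by_cases hA : A s <;> by_cases hB : B s <;> simp [hA, hB] <;> linarith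

lemma stmt13_iidProb_union {β : Type*} {D : α → ℝ} (hD : IsDist D) {n : ℕ}
    (Q : Finset β) (B : β → (Fin n → α) → Prop) :
    iidProb D n (fun s => ∃ q ∈ Q, B q s) ≤ ∑ q ∈ Q, iidProb D n (B q) := by
  unfold iidProb
  rw [Finset.sum_comm]
  apply Finset.sum_le_sum
  intro s _
  have hp : (0:ℝ) ≤ ∏ i, D (s i) := Finset.prod_nonneg fun i _ => hD.1 (s i)
  split_ifs with h1
  · obtain ⟨q, hq, hB⟩ := h1
    calc (∏ i, D (s i)) = (if B q s then ∏ i, D (s i) else 0) := by rw [if_pos hB]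
    _ ≤ ∑ q ∈ Q, (if B q s then ∏ i, D (s i) else 0) :=
        Finset.single_le_sum (f := fun r => if B r s then ∏ i, D (s i) else 0)
          (fun r _ => by split_ifs with h <;> [exact hp; exact le_refl 0]) hq
  · exact Finset.sum_nonneg fun r _ => by split_ifs with h <;> [exact hp; exact le_refl 0]

end Stmt13Helpers

set_option maxHeartbeats 1000000 in
/-- Generalization of empirical loss decrease.
If `n ≥ log(2|𝒬|/δ)/(2ε²)`, then with probability at least `1 − δ` over `n` i.i.d. draws from
`D`, for all `p, q ∈ 𝒬`: if the empirical squared loss of `q` is at most that of `p` minus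
`c`, then the population squared loss of `q` is at most that of `p` plus `2ε − c`.
(In particular, with `c = k·ε²`, the post-processed predictor `p_k` obtained after `k`
iterations of multiaccuracy boost satisfies
`E_D[(y − p_k(x))²] ≤ E_D[(y − p(x))²] + 2ε − k·ε²`.) -/
theorem stmt_13 [Fintype X] [Nonempty X]
    (𝒬 : Finset (X → ℝ)) (h𝒬01 : ∀ q ∈ 𝒬, ∀ x, q x ∈ Set.Icc (0 : ℝ) 1)
    (D : X × Bool → ℝ) (hD : IsDist D)
    (ε δ c : ℝ) (hε : 0 < ε) (hδ : δ ∈ Set.Ioc (0 : ℝ) 1) (hc : 0 ≤ c)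
    (n : ℕ)
    (hn : Real.log (2 * (𝒬.card : ℝ) / δ) / (2 * ε ^ 2) ≤ (n : ℝ)) :
    1 - δ ≤ iidProb D n (fun s => ∀ p ∈ 𝒬, ∀ q ∈ 𝒬,
      (1 / (n : ℝ)) * ∑ i, (bval (s i).2 - q (s i).1) ^ 2 ≤
          (1 / (n : ℝ)) * ∑ i, (bval (s i).2 - p (s i).1) ^ 2 - c →
        ∑ z : X × Bool, D z * (bval z.2 - q z.1) ^ 2 ≤
          ∑ z : X × Bool, D z * (bval z.2 - p z.1) ^ 2 + 2 * ε - c) := by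
    classical
  rcases Finset.eq_empty_or_nonempty 𝒬 with hQ | hQne
  · subst hQ
    have hone : iidProb D n (fun s : Fin n → X × Bool =>
        ∀ p ∈ (∅ : Finset (X → ℝ)), ∀ q ∈ (∅ : Finset (X → ℝ)),
        (1 / (n : ℝ)) * ∑ i, (bval (s i).2 - q (s i).1) ^ 2 ≤
            (1 / (n : ℝ)) * ∑ i, (bval (s i).2 - p (s i).1) ^ 2 - c →
          ∑ z : X × Bool, D z * (bval z.2 - q z.1) ^ 2 ≤
            ∑ z : X × Bool, D z * (bval z.2 - p z.1) ^ 2 + 2 * ε - c) = 1 := by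
      unfold iidProb
      rw [← stmt13_iidProb_total hD n]
      refine Finset.sum_congr rfl fun s _ => ?_
      rw [if_pos]
      intro p hp
      exact absurd hp (Finset.notMem_empty p)
    rw [hone]
    linarith [hδ.1]
  -- nonempty case
  have hcard1 : (1:ℝ) ≤ (𝒬.card : ℝ) := by
    have := Finset.card_pos.2 hQne
    exact_mod_cast this
  have hδ0 := hδ.1
  have hδ1 := hδ.2
  have hratio : (1:ℝ) < 2 * (𝒬.card : ℝ) / δ := by
    rw [lt_div_iff₀ hδ0]
    nlinarith
  have hlogpos : 0 < Real.log (2 * (𝒬.card : ℝ) / δ) := Real.log_pos hratio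
  have hnpos : (0:ℝ) < (n:ℝ) :=
    lt_of_lt_of_le (div_pos hlogpos (by positivity)) hn
  -- numeric bound : 2 * card * exp(-(2 n ε²)) ≤ δ
  have hlog2 : Real.log (2 * (𝒬.card : ℝ) / δ) ≤ 2 * ε ^ 2 * (n:ℝ) := by
    rw [div_le_iff₀ (by positivity : (0:ℝ) < 2 * ε ^ 2)] at hn
    linarith
  have hexp : 2 * (𝒬.card : ℝ) / δ ≤ Real.exp (2 * ε ^ 2 * (n:ℝ)) :=
    (Real.log_le_iff_le_exp (by positivity)).1 hlog2
  have hEk : Real.exp (2 * ε ^ 2 * (n:ℝ)) * Real.exp (-(2 * (n:ℝ) * ε ^ 2)) = 1 := by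
    rw [← Real.exp_add, show 2 * ε ^ 2 * (n:ℝ) + -(2 * (n:ℝ) * ε ^ 2) = 0 by ring,
      Real.exp_zero]
  have hnum : 2 * (𝒬.card : ℝ) * Real.exp (-(2 * (n:ℝ) * ε ^ 2)) ≤ δ := by
    have h5 := mul_le_mul_of_nonneg_right hexp (Real.exp_pos (-(2 * (n:ℝ) * ε ^ 2))).le
    rw [hEk] at h5
    have h6 : 2 * (𝒬.card : ℝ) * Real.exp (-(2 * (n:ℝ) * ε ^ 2))
        = δ * (2 * (𝒬.card : ℝ) / δ * Real.exp (-(2 * (n:ℝ) * ε ^ 2))) := by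
      field_simp
    rw [h6]
    nlinarith
  -- the squared loss is in [0,1]
  have hbound : ∀ q ∈ 𝒬, ∀ z : X × Bool, (bval z.2 - q z.1) ^ 2 ∈ Set.Icc (0:ℝ) 1 := by
    intro q hq z
    obtain ⟨h0, h1⟩ := h𝒬01 q hq z.1
    have hb : bval z.2 = 0 ∨ bval z.2 = 1 := by cases z.2 <;> simp [bval]
    constructor
    · positivity
    · rcases hb with h | h <;> rw [h] <;> nlinarith
  -- bad events
  set Bad : (X → ℝ) → (Fin n → X × Bool) → Prop := fun q s =>
    ((n:ℝ) * ε ≤ (∑ i, (bval (s i).2 - q (s i).1) ^ 2)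
        - (n:ℝ) * ∑ z : X × Bool, D z * (bval z.2 - q z.1) ^ 2) ∨
    ((n:ℝ) * ε ≤ (n:ℝ) * (∑ z : X × Bool, D z * (bval z.2 - q z.1) ^ 2)
        - ∑ i, (bval (s i).2 - q (s i).1) ^ 2) with hBad
  have hbadq : ∀ q ∈ 𝒬, iidProb D n (Bad q) ≤ 2 * Real.exp (-(2 * (n:ℝ) * ε ^ 2)) := by
    intro q hq
    have hfq : ∀ z : X × Bool, (bval z.2 - q z.1) ^ 2 ∈ Set.Icc (0:ℝ) 1 := hbound q hq
    have hup : iidProb D n (fun s => (n:ℝ) * ε ≤ (∑ i, (bval (s i).2 - q (s i).1) ^ 2)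
        - (n:ℝ) * ∑ z : X × Bool, D z * (bval z.2 - q z.1) ^ 2)
        ≤ Real.exp (-(2 * (n:ℝ) * ε ^ 2)) :=
      stmt13_chernoff D hD (fun z => (bval z.2 - q z.1) ^ 2) hfq n hε
    have hlow : iidProb D n (fun s => (n:ℝ) * ε ≤
        (n:ℝ) * (∑ z : X × Bool, D z * (bval z.2 - q z.1) ^ 2)
        - ∑ i, (bval (s i).2 - q (s i).1) ^ 2)
        ≤ Real.exp (-(2 * (n:ℝ) * ε ^ 2)) := by
      set f' : X × Bool → ℝ := fun z => 1 - (bval z.2 - q z.1) ^ 2 with hf'def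
      have hf' : ∀ z, f' z ∈ Set.Icc (0:ℝ) 1 := by
        intro z
        obtain ⟨a, b⟩ := hfq z
        constructor <;> simp only [hf'def] <;> linarith
      have hch := stmt13_chernoff D hD f' hf' n hε
      have hμ' : ∑ a : X × Bool, D a * f' a
          = 1 - ∑ z : X × Bool, D z * (bval z.2 - q z.1) ^ 2 := by
        have hk : ∀ a : X × Bool, D a * f' a = D a - D a * (bval a.2 - q a.1) ^ 2 :=
          fun a => by simp only [hf'def]; ring
        rw [Finset.sum_congr rfl (fun a _ => hk a), Finset.sum_sub_distrib, hD.2]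
      have hS : ∀ s : Fin n → X × Bool,
          ∑ i, f' (s i) = (n:ℝ) - ∑ i, (bval (s i).2 - q (s i).1) ^ 2 := by
        intro s
        simp only [hf'def]
        rw [Finset.sum_sub_distrib, Finset.sum_const, Finset.card_univ, Fintype.card_fin]
        simp [nsmul_eq_mul]
      have hiff : ∀ s : Fin n → X × Bool,
          ((n:ℝ) * ε ≤ (n:ℝ) * (∑ z : X × Bool, D z * (bval z.2 - q z.1) ^ 2)
            - ∑ i, (bval (s i).2 - q (s i).1) ^ 2)
          ↔ ((n:ℝ) * ε ≤ (∑ i, f' (s i)) - (n:ℝ) * ∑ a : X × Bool, D a * f' a) := by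
        intro s
        rw [hS s, hμ']
        constructor <;> intro h <;> nlinarith
      rw [stmt13_iidProb_congr hiff]
      exact hch
    calc iidProb D n (Bad q) ≤ _ + _ := stmt13_iidProb_or hD
    _ ≤ Real.exp (-(2 * (n:ℝ) * ε ^ 2)) + Real.exp (-(2 * (n:ℝ) * ε ^ 2)) :=
        add_le_add hup hlow
    _ = 2 * Real.exp (-(2 * (n:ℝ) * ε ^ 2)) := by ring
  have hunion : iidProb D n (fun s => ∃ q ∈ 𝒬, Bad q s) ≤ δ := by
    calc iidProb D n (fun s => ∃ q ∈ 𝒬, Bad q s)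
        ≤ ∑ q ∈ 𝒬, iidProb D n (Bad q) := stmt13_iidProb_union hD 𝒬 Bad
    _ ≤ ∑ _q ∈ 𝒬, 2 * Real.exp (-(2 * (n:ℝ) * ε ^ 2)) := Finset.sum_le_sum hbadq
    _ = (𝒬.card : ℝ) * (2 * Real.exp (-(2 * (n:ℝ) * ε ^ 2))) := by
        rw [Finset.sum_const, nsmul_eq_mul]
    _ ≤ δ := by nlinarith [hnum]
  have hclaim : ∀ s : Fin n → X × Bool, (¬ ∃ q ∈ 𝒬, Bad q s) →
      (∀ p ∈ 𝒬, ∀ q ∈ 𝒬,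
      (1 / (n : ℝ)) * ∑ i, (bval (s i).2 - q (s i).1) ^ 2 ≤
          (1 / (n : ℝ)) * ∑ i, (bval (s i).2 - p (s i).1) ^ 2 - c →
        ∑ z : X × Bool, D z * (bval z.2 - q z.1) ^ 2 ≤
          ∑ z : X × Bool, D z * (bval z.2 - p z.1) ^ 2 + 2 * ε - c) := by
    intro s hs p hp q hq hemp
    push_neg at hs
    have hsq := hs q hq
    have hsp := hs p hp
    simp only [hBad, not_or, not_le] at hsq hsp
    obtain ⟨h1q, h2q⟩ := hsq
    obtain ⟨h1p, h2p⟩ := hsp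
    have h4 : (∑ i, (bval (s i).2 - q (s i).1) ^ 2)
        = (n:ℝ) * ((1 / (n:ℝ)) * ∑ i, (bval (s i).2 - q (s i).1) ^ 2) := by
      field_simp
    have h5 : (∑ i, (bval (s i).2 - p (s i).1) ^ 2)
        = (n:ℝ) * ((1 / (n:ℝ)) * ∑ i, (bval (s i).2 - p (s i).1) ^ 2) := by
      field_simp
    have h := mul_le_mul_of_nonneg_left hemp hnpos.le
    rw [← h4] at h
    have h5' : (n:ℝ) * ((1 / (n:ℝ)) * (∑ i, (bval (s i).2 - p (s i).1) ^ 2) - c)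
        = (∑ i, (bval (s i).2 - p (s i).1) ^ 2) - c * (n:ℝ) := by
      field_simp
    rw [h5'] at h
    have hfin : (n:ℝ) * (∑ z : X × Bool, D z * (bval z.2 - q z.1) ^ 2)
        ≤ (n:ℝ) * ((∑ z : X × Bool, D z * (bval z.2 - p z.1) ^ 2) + 2 * ε - c) := by
      have hexpand : (n:ℝ) * ((∑ z : X × Bool, D z * (bval z.2 - p z.1) ^ 2) + 2 * ε - c)
          = (n:ℝ) * (∑ z : X × Bool, D z * (bval z.2 - p z.1) ^ 2)
            + 2 * ((n:ℝ) * ε) - c * (n:ℝ) := by ring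
      rw [hexpand]
      linarith
    exact le_of_mul_le_mul_left hfin hnpos
  calc 1 - δ ≤ 1 - iidProb D n (fun s => ∃ q ∈ 𝒬, Bad q s) := by linarith
  _ = iidProb D n (fun s => ¬ ∃ q ∈ 𝒬, Bad q s) := (stmt13_iidProb_not hD _).symm
  _ ≤ _ := stmt13_iidProb_mono hD hclaim
end
end
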